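/- arXiv:2004.02528 — 3 statements merged into one kernel-verified Lean document; each statement's English description precedes it below -/
import Mathlib

section
/- Let ψ : ℝⁿ → ℝ be a C² function with |∇ψ| < 1 everywhere whose graph in ℝ^{n+1}_1 has constant mean curvature H. If 1/√(1-|∇ψ|²) = o(r) as r = |u| → ∞, then H = 0. -/
open MeasureTheory Metric
open scoped ENNReal

/-- Divergence of a vector field on Euclidean space: trace of the total derivative. -/
noncomputable def vdiv {n : ℕ} (X : EuclideanSpace ℝ (Fin n) → EuclideanSpace ℝ (Fin n))
    (u : EuclideanSpace ℝ (Fin n)) : ℝ :=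
  LinearMap.trace ℝ (EuclideanSpace ℝ (Fin n)) (fderiv ℝ X u).toLinearMap

section Aux

open Set

private lemma aux_component_le {n : ℕ} (v : EuclideanSpace ℝ (Fin n)) (i : Fin n) :
    |v i| ≤ ‖v‖ := by
  rw [EuclideanSpace.norm_eq]
  calc |v i| = Real.sqrt (|v i| ^ 2) := (Real.sqrt_sq (abs_nonneg _)).symm
    _ ≤ _ := by
        apply Real.sqrt_le_sqrt
        have := Finset.single_le_sum (f := fun j => ‖v j‖ ^ 2)
          (fun j _ => sq_nonneg _) (Finset.mem_univ i)
        simpa [Real.norm_eq_abs] using this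

private lemma aux_norm_le {m : ℕ} (R : ℝ) (hR : 0 ≤ R) (y : Fin (m+1) → ℝ)
    (hx : ∀ j, |y j| ≤ R) :
    ‖(EuclideanSpace.equiv (Fin (m+1)) ℝ).symm y‖ ≤ Real.sqrt ((m:ℝ)+1) * R := by
  rw [EuclideanSpace.norm_eq]
  have hsum : (∑ j, ‖(EuclideanSpace.equiv (Fin (m+1)) ℝ).symm y j‖ ^ 2)
      ≤ ((m:ℝ)+1) * R ^ 2 := by
    calc (∑ j, ‖(EuclideanSpace.equiv (Fin (m+1)) ℝ).symm y j‖ ^ 2)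
        ≤ ∑ _j : Fin (m+1), R ^ 2 := by
          apply Finset.sum_le_sum
          intro j _
          have h2 : ‖(EuclideanSpace.equiv (Fin (m+1)) ℝ).symm y j‖ ≤ R := by
            simpa [Real.norm_eq_abs] using hx j
          exact pow_le_pow_left₀ (norm_nonneg _) h2 2
      _ = ((m:ℝ)+1) * R ^ 2 := by simp [mul_comm]
  calc Real.sqrt (∑ j, ‖(EuclideanSpace.equiv (Fin (m+1)) ℝ).symm y j‖ ^ 2)
      ≤ Real.sqrt (((m:ℝ)+1) * R ^ 2) := Real.sqrt_le_sqrt hsum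
    _ = Real.sqrt ((m:ℝ)+1) * R := by
        rw [Real.sqrt_mul (by positivity), Real.sqrt_sq hR]

private lemma aux_growth {n : ℕ} (f : EuclideanSpace ℝ (Fin n) → ℝ) (hf : Continuous f)
    (hgrow : f =o[Filter.cocompact (EuclideanSpace ℝ (Fin n))] fun u => ‖u‖)
    (ε : ℝ) (hε : 0 < ε) : ∃ C : ℝ, 0 ≤ C ∧ ∀ v, f v ≤ ε * ‖v‖ + C := by
  have h := hgrow.def hε
  rw [Filter.eventually_iff, Filter.mem_cocompact] at h
  obtain ⟨K, hK, hKsub⟩ := h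
  obtain ⟨r, hr⟩ := hK.isBounded.subset_closedBall 0
  obtain ⟨C, hC⟩ := (isCompact_closedBall (0:EuclideanSpace ℝ (Fin n))
    (max r 0)).exists_bound_of_continuousOn hf.continuousOn
  refine ⟨max C 0, le_max_right _ _, fun v => ?_⟩
  by_cases hv : v ∈ closedBall (0:EuclideanSpace ℝ (Fin n)) (max r 0)
  · have h1 : f v ≤ C := le_trans (le_abs_self _)
      (by simpa [Real.norm_eq_abs] using hC v hv)
    nlinarith [norm_nonneg v, le_max_left C 0]
  · have hvK : v ∉ K := fun h => hv (closedBall_subset_closedBall (le_max_left _ _) (hr h))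
    have h2 := hKsub (Set.mem_compl hvK)
    simp only [Set.mem_setOf_eq, Real.norm_eq_abs] at h2
    have h3 : f v ≤ ε * ‖v‖ := le_trans (le_abs_self _)
      (by simpa [abs_of_nonneg (norm_nonneg v)] using h2)
    nlinarith [le_max_right C 0]

private lemma aux_trace {n : ℕ}
    (A : EuclideanSpace ℝ (Fin n) →L[ℝ] EuclideanSpace ℝ (Fin n)) :
    LinearMap.trace ℝ _ A.toLinearMap = ∑ i, A (EuclideanSpace.single i 1) i := by
  rw [LinearMap.trace_eq_matrix_trace ℝ (EuclideanSpace.basisFun (Fin n) ℝ).toBasis]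
  simp [Matrix.trace, LinearMap.toMatrix_apply, EuclideanSpace.basisFun_repr, Matrix.diag]

end Aux

set_option maxHeartbeats 1000000 in
/-- Dong's theorem: if 1/√(1-|∇ψ|²) = o(|u|) as |u| → ∞, then the entire space-like CMC
graph has vanishing mean curvature. -/
theorem cmc_vanishing_littleO (n : ℕ) (hn : 0 < n) (H : ℝ)
    (ψ : EuclideanSpace ℝ (Fin n) → ℝ) (hψ : ContDiff ℝ 2 ψ)
    (hsp : ∀ u, ‖gradient ψ u‖ < 1)
    (hmean : ∀ u, (n : ℝ) * H =
      vdiv (fun v => (Real.sqrt (1 - ‖gradient ψ v‖ ^ 2))⁻¹ • gradient ψ v) u)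
    (hgrow : (fun u : EuclideanSpace ℝ (Fin n) => (Real.sqrt (1 - ‖gradient ψ u‖ ^ 2))⁻¹)
      =o[Filter.cocompact (EuclideanSpace ℝ (Fin n))] fun u => ‖u‖) :
    H = 0 := by
  obtain ⟨m, rfl⟩ : ∃ m, n = m + 1 := ⟨n - 1, (Nat.succ_pred_eq_of_pos hn).symm⟩
  set g := gradient ψ with hgdef
  set f : EuclideanSpace ℝ (Fin (m+1)) → ℝ :=
    fun u => (Real.sqrt (1 - ‖g u‖ ^ 2))⁻¹ with hfdef
  set X : EuclideanSpace ℝ (Fin (m+1)) → EuclideanSpace ℝ (Fin (m+1)) :=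
    fun v => (Real.sqrt (1 - ‖g v‖ ^ 2))⁻¹ • g v with hXdef
  have hXf : ∀ v, X v = f v • g v := fun v => rfl
  -- smoothness
  have hgC : ContDiff ℝ 1 g := by
    have h1 : ContDiff ℝ 1 (fderiv ℝ ψ) := hψ.fderiv_right (by norm_num)
    exact ((InnerProductSpace.toDual ℝ
      (EuclideanSpace ℝ (Fin (m+1)))).symm.contDiff).comp h1
  have hpos : ∀ v, 0 < 1 - ‖g v‖ ^ 2 := by
    intro v; have := hsp v; nlinarith [norm_nonneg (g v)]
  have hfC : ∀ v, ContDiffAt ℝ 1 f v := by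
    intro v
    have h2 : ContDiff ℝ 1 (fun v => 1 - ‖g v‖ ^ 2) := contDiff_const.sub (hgC.norm_sq ℝ)
    exact ((Real.contDiffAt_sqrt (hpos v).ne').comp v h2.contDiffAt).inv
      (Real.sqrt_ne_zero'.2 (hpos v))
  have hXd : Differentiable ℝ X :=
    fun v => (((hfC v).smul hgC.contDiffAt).differentiableAt one_ne_zero)
  have hfpos : ∀ v, 0 ≤ f v := fun v => inv_nonneg.2 (Real.sqrt_nonneg _)
  have hXle : ∀ v, ‖X v‖ ≤ f v := by
    intro v
    calc ‖X v‖ = |f v| * ‖g v‖ := by rw [hXf, norm_smul, Real.norm_eq_abs]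
      _ ≤ f v * 1 := by
          rw [abs_of_nonneg (hfpos v)]
          exact mul_le_mul_of_nonneg_left (hsp v).le (hfpos v)
      _ = f v := mul_one _
  have hfcont : Continuous f :=
    continuous_iff_continuousAt.2 fun v => (hfC v).continuousAt
  -- divergence is constant
  have hdiv : ∀ u, LinearMap.trace ℝ _ (fderiv ℝ X u).toLinearMap = (↑(m+1) : ℝ) * H :=
    fun u => (hmean u).symm
  -- main estimate
  have main : ∀ δ : ℝ, 0 < δ → |H| ≤ δ := by
    intro δ hδ
    set s : ℝ := Real.sqrt ((m:ℝ)+1) with hsdef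
    have hs0 : 0 < s := Real.sqrt_pos.2 (by positivity)
    set ε : ℝ := δ / (2 * s) with hεdef
    have hε : 0 < ε := by positivity
    obtain ⟨C, hC0, hCb⟩ := aux_growth f hfcont hgrow ε hε
    set R : ℝ := (2 * C + 1) / δ with hRdef
    have hR : 0 < R := by positivity
    have hδR : δ * R = 2 * C + 1 := by rw [hRdef, mul_comm, div_mul_cancel₀ _ hδ.ne']
    -- divergence theorem
    set L := EuclideanSpace.equiv (Fin (m+1)) ℝ with hL
    set Y : (Fin (m+1) → ℝ) → (Fin (m+1) → ℝ) := fun x => L (X (L.symm x)) with hY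
    set D : (Fin (m+1) → ℝ) → (Fin (m+1) → ℝ) →L[ℝ] (Fin (m+1) → ℝ) := fun x =>
      ((L : _ →L[ℝ] (Fin (m+1) → ℝ)).comp (fderiv ℝ X (L.symm x))).comp
        (L.symm : (Fin (m+1) → ℝ) →L[ℝ] _) with hD
    have hsum : ∀ x, (∑ i, D x (Pi.single i 1) i) = (↑(m+1) : ℝ) * H := by
      intro x
      have hc : ∀ i, D x (Pi.single i 1) i
          = (fderiv ℝ X (L.symm x)) (EuclideanSpace.single i 1) i := fun i => rfl
      rw [Finset.sum_congr rfl fun i _ => hc i, ← aux_trace, hdiv]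
    have hYcont : Continuous Y := by
      exact (L : _ →L[ℝ] (Fin (m+1) → ℝ)).continuous.comp
        (hXd.continuous.comp (L.symm : (Fin (m+1) → ℝ) →L[ℝ] _).continuous)
    have key := MeasureTheory.integral_divergence_of_hasFDerivAt_off_countable
      (a := fun _ : Fin (m+1) => -R) (b := fun _ => R)
      (by intro i; dsimp; linarith) Y D ∅ Set.countable_empty
      hYcont.continuousOn
      (fun x _ => by
        exact ((L : _ →L[ℝ] (Fin (m+1) → ℝ)).hasFDerivAt.comp _
          (((hXd _).hasFDerivAt).comp x (L.symm : (Fin (m+1) → ℝ) →L[ℝ] _).hasFDerivAt)))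
      (by
        rw [show (fun x => ∑ i, D x (Pi.single i 1) i) = fun _ => (↑(m+1) : ℝ) * H from
          funext hsum]
        exact (integrableOn_const_iff enorm_ne_top).2 (Or.inr (by
          rw [Real.volume_Icc_pi]
          exact ENNReal.prod_lt_top (fun i _ => ENNReal.ofReal_lt_top))))
    -- LHS value
    have hle : (fun _ : Fin (m+1) => -R) ≤ fun _ => R := fun i => by dsimp; linarith
    have hvol : (volume (Set.Icc (fun _ : Fin (m+1) => -R) fun _ => R)).toReal
        = (2*R)^(m+1) := by
      rw [Real.volume_Icc_pi_toReal hle, Finset.prod_const, Finset.card_univ,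
        Fintype.card_fin, sub_neg_eq_add]
      ring
    have hLHS : (∫ x in Set.Icc (fun _ : Fin (m+1) => -R) fun _ => R,
        ∑ i, D x (Pi.single i 1) i) = (2*R)^(m+1) * ((↑(m+1) : ℝ) * H) := by
      rw [show (fun x => ∑ i, D x (Pi.single i 1) i) = fun _ => (↑(m+1) : ℝ) * H from
        funext hsum]
      rw [setIntegral_const, measureReal_def, hvol, smul_eq_mul]
    -- face bounds
    set B : ℝ := ε * (s * R) + C with hB
    have hB0 : 0 ≤ B := by positivity
    have hface : ∀ (i : Fin (m+1)) (c : ℝ), |c| ≤ R →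
        ‖∫ x in Set.Icc ((fun _ : Fin (m+1) => -R) ∘ i.succAbove)
            ((fun _ : Fin (m+1) => R) ∘ i.succAbove), Y (i.insertNth c x) i‖
          ≤ B * (2*R)^m := by
      intro i c hc
      have hvolf : volume (Set.Icc ((fun _ : Fin (m+1) => -R) ∘ i.succAbove)
          ((fun _ : Fin (m+1) => R) ∘ i.succAbove)) < ⊤ := by
        rw [Real.volume_Icc_pi]
        exact ENNReal.prod_lt_top (fun j _ => ENNReal.ofReal_lt_top)
      have hvolf2 : (volume (Set.Icc ((fun _ : Fin (m+1) => -R) ∘ i.succAbove)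
          ((fun _ : Fin (m+1) => R) ∘ i.succAbove))).toReal = (2*R)^m := by
        rw [Real.volume_Icc_pi_toReal (fun j => by dsimp [Function.comp]; linarith)]
        simp only [Function.comp_apply, sub_neg_eq_add, Finset.prod_const,
          Finset.card_univ, Fintype.card_fin]
        ring
      have hbound : ∀ x ∈ Set.Icc ((fun _ : Fin (m+1) => -R) ∘ i.succAbove)
          ((fun _ : Fin (m+1) => R) ∘ i.succAbove), ‖Y (i.insertNth c x) i‖ ≤ B := by
        intro x hx
        have hmem : i.insertNth c x ∈
            Set.Icc (fun _ : Fin (m+1) => -R) (fun _ => R) := by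
          refine Fin.insertNth_mem_Icc.2 ⟨?_, hx⟩
          exact abs_le.1 hc
        have hcoord : ∀ j, |(i.insertNth c x : Fin (m+1) → ℝ) j| ≤ R := by
          intro j
          exact abs_le.2 ⟨hmem.1 j, hmem.2 j⟩
        set v := L.symm (i.insertNth c x) with hv
        have h1 : ‖Y (i.insertNth c x) i‖ = |(X v) i| := by
          rw [Real.norm_eq_abs]; rfl
        have h2 : |(X v) i| ≤ ‖X v‖ := aux_component_le _ _
        have h3 : ‖X v‖ ≤ f v := hXle v
        have h4 : f v ≤ ε * ‖v‖ + C := hCb v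
        have h5 : ‖v‖ ≤ s * R := aux_norm_le R hR.le _ hcoord
        rw [h1]
        calc |(X v) i| ≤ ε * ‖v‖ + C := le_trans h2 (le_trans h3 h4)
          _ ≤ ε * (s * R) + C := by nlinarith
      calc ‖∫ x in Set.Icc ((fun _ : Fin (m+1) => -R) ∘ i.succAbove)
            ((fun _ : Fin (m+1) => R) ∘ i.succAbove), Y (i.insertNth c x) i‖
          ≤ B * (volume (Set.Icc ((fun _ : Fin (m+1) => -R) ∘ i.succAbove)
              ((fun _ : Fin (m+1) => R) ∘ i.succAbove))).toReal :=
            norm_setIntegral_le_of_norm_le_const hvolf hbound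
        _ = B * (2*R)^m := by rw [hvolf2]
    -- combine
    have habs : |(2*R)^(m+1) * ((↑(m+1) : ℝ) * H)| ≤ (↑(m+1) : ℝ) * (2 * (B * (2*R)^m)) := by
      rw [← hLHS, key]
      calc |∑ i : Fin (m+1), ((∫ x in Set.Icc ((fun _ : Fin (m+1) => -R) ∘ i.succAbove)
              ((fun _ : Fin (m+1) => R) ∘ i.succAbove), Y (i.insertNth R x) i) -
            ∫ x in Set.Icc ((fun _ : Fin (m+1) => -R) ∘ i.succAbove)
              ((fun _ : Fin (m+1) => R) ∘ i.succAbove), Y (i.insertNth (-R) x) i)|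
          ≤ ∑ i : Fin (m+1), (2 * (B * (2*R)^m)) := by
            refine le_trans (Finset.abs_sum_le_sum_abs _ _) (Finset.sum_le_sum fun i _ => ?_)
            have h1 := hface i R (by rw [abs_of_nonneg hR.le])
            have h2 := hface i (-R) (by rw [abs_neg, abs_of_nonneg hR.le])
            rw [Real.norm_eq_abs] at h1 h2
            calc |_ - _| ≤ |_| + |_| := abs_sub _ _
              _ ≤ 2 * (B * (2*R)^m) := by linarith
        _ = (↑(m+1) : ℝ) * (2 * (B * (2*R)^m)) := by
            rw [Finset.sum_const, Finset.card_univ, Fintype.card_fin, nsmul_eq_mul]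
    -- arithmetic
    have hpow : (2*R)^(m+1) = (2*R)^m * (2*R) := pow_succ _ _
    have hPpos : (0:ℝ) < (2*R)^m := by positivity
    have hm1 : (0:ℝ) < (↑(m+1) : ℝ) := by positivity
    have hεs : ε * s = δ / 2 := by
      rw [hεdef, div_mul_eq_mul_div, mul_div_mul_right _ _ hs0.ne']
    rw [abs_mul, abs_mul, abs_of_nonneg (by positivity : (0:ℝ) ≤ (2*R)^(m+1)),
      abs_of_nonneg hm1.le] at habs
    have h2RB : |H| * (2*R) ≤ 2 * B := by
      rw [hpow] at habs
      have h' : (|H| * (2*R)) * ((↑(m+1) : ℝ) * (2*R)^m)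
          ≤ (2 * B) * ((↑(m+1) : ℝ) * (2*R)^m) := by linear_combination habs
      exact le_of_mul_le_mul_right h' (mul_pos hm1 hPpos)
    have hBval : 2 * B = δ * R + 2 * C := by
      rw [hB]; linear_combination (2*R) * hεs
    have hfin : |H| * (2*R) ≤ δ * (2*R) := by linarith
    exact le_of_mul_le_mul_right hfin (by positivity)
  have h0 : |H| ≤ 0 := le_of_forall_pos_le_add (fun δ hδ => by linarith [main δ hδ])
  exact abs_eq_zero.1 (le_antisymm h0 (abs_nonneg H))
end

section
/- Let ψ : ℝⁿ → ℝ be a C² function whose graph in Euclidean ℝ^{n+1} has constant mean curvature H, where nH = div(∇ψ/√(1+|∇ψ|²)). Then H = 0. -/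
open MeasureTheory Metric
open scoped ENNReal

lemma abs_coord_le_norm {k : ℕ} (v : EuclideanSpace ℝ (Fin k)) (i : Fin k) : |v i| ≤ ‖v‖ := by
  rw [EuclideanSpace.norm_eq]
  have h1 : |v i| = Real.sqrt (‖v i‖ ^ 2) := by
    rw [Real.sqrt_sq_eq_abs]; simp [abs_abs]
  rw [h1]
  apply Real.sqrt_le_sqrt
  exact Finset.single_le_sum (f := fun j => ‖v j‖ ^ 2) (fun j _ => by positivity)
    (Finset.mem_univ i)

lemma trace_eq_sum_coord {k : ℕ} (T : EuclideanSpace ℝ (Fin k) →L[ℝ] EuclideanSpace ℝ (Fin k)) :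
    LinearMap.trace ℝ (EuclideanSpace ℝ (Fin k)) T.toLinearMap =
      ∑ i, T (EuclideanSpace.single i 1) i := by
  rw [LinearMap.trace_eq_matrix_trace ℝ (EuclideanSpace.basisFun (Fin k) ℝ).toBasis]
  rw [Matrix.trace]
  simp [Matrix.diag, LinearMap.toMatrix_apply, EuclideanSpace.basisFun_apply]

/-- Vanishing theorem for entire CMC graphs in Euclidean space (Heinz, Chern, Flanders). -/
theorem cmc_vanishing_euclidean (n : ℕ) (hn : 0 < n) (H : ℝ)
    (ψ : EuclideanSpace ℝ (Fin n) → ℝ) (hψ : ContDiff ℝ 2 ψ)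
    (hmean : ∀ u, (n : ℝ) * H =
      vdiv (fun v => (Real.sqrt (1 + ‖gradient ψ v‖ ^ 2))⁻¹ • gradient ψ v) u) :
    H = 0 := by
  obtain ⟨m, rfl⟩ : ∃ m, n = m + 1 := ⟨n - 1, (Nat.succ_pred_eq_of_pos hn).symm⟩
  set g : EuclideanSpace ℝ (Fin (m + 1)) → EuclideanSpace ℝ (Fin (m + 1)) :=
    gradient ψ with hg_def
  set X : EuclideanSpace ℝ (Fin (m + 1)) → EuclideanSpace ℝ (Fin (m + 1)) :=
    fun v => (Real.sqrt (1 + ‖g v‖ ^ 2))⁻¹ • g v with hX_def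
  -- gradient is C¹
  have hg : ContDiff ℝ 1 g := by
    have h1 : ContDiff ℝ 1 (fderiv ℝ ψ) := hψ.fderiv_right (m := 1) (by norm_num)
    have h2 : g = fun v =>
        (InnerProductSpace.toDual ℝ (EuclideanSpace ℝ (Fin (m + 1)))).symm (fderiv ℝ ψ v) := rfl
    rw [h2]
    exact (InnerProductSpace.toDual ℝ (EuclideanSpace ℝ (Fin (m + 1)))).symm.contDiff.comp h1
  have hpos : ∀ v : EuclideanSpace ℝ (Fin (m + 1)), 0 < 1 + ‖g v‖ ^ 2 := fun v => by positivity
  have hXc : ContDiff ℝ 1 X := by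
    have hsq : ContDiff ℝ 1 fun v : EuclideanSpace ℝ (Fin (m + 1)) => 1 + ‖g v‖ ^ 2 :=
      contDiff_const.add (hg.norm_sq ℝ)
    have hs : ContDiff ℝ 1 fun v : EuclideanSpace ℝ (Fin (m + 1)) => Real.sqrt (1 + ‖g v‖ ^ 2) :=
      hsq.sqrt fun v => (hpos v).ne'
    exact (hs.inv fun v => (Real.sqrt_pos.mpr (hpos v)).ne').smul hg
  have hXd : Differentiable ℝ X := hXc.differentiable one_ne_zero
  have hXle : ∀ v, ‖X v‖ ≤ 1 := by
    intro v
    rw [hX_def]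
    simp only [norm_smul, norm_inv, Real.norm_eq_abs,
      abs_of_nonneg (Real.sqrt_nonneg _)]
    rw [inv_mul_le_iff₀ (Real.sqrt_pos.mpr (hpos v)), mul_one]
    calc ‖g v‖ = Real.sqrt (‖g v‖ ^ 2) := by rw [Real.sqrt_sq (norm_nonneg _)]
    _ ≤ Real.sqrt (1 + ‖g v‖ ^ 2) := Real.sqrt_le_sqrt (by linarith)
  -- transport to the pi space
  set e := PiLp.continuousLinearEquiv 2 ℝ (fun _ : Fin (m + 1) => ℝ) with he_def
  set f : (Fin (m + 1) → ℝ) → (Fin (m + 1) → ℝ) := fun x => e (X (e.symm x)) with hf_def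
  set f' : (Fin (m + 1) → ℝ) → (Fin (m + 1) → ℝ) →L[ℝ] (Fin (m + 1) → ℝ) :=
    fun x => ((e : EuclideanSpace ℝ (Fin (m + 1)) →L[ℝ] (Fin (m + 1) → ℝ)).comp (fderiv ℝ X (e.symm x))).comp
      (e.symm : (Fin (m + 1) → ℝ) →L[ℝ] EuclideanSpace ℝ (Fin (m + 1))) with hf'_def
  have hfd : ∀ x, HasFDerivAt f (f' x) x := by
    intro x
    exact ((e : EuclideanSpace ℝ (Fin (m + 1)) →L[ℝ] (Fin (m + 1) → ℝ)).hasFDerivAt.comp _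
      ((hXd _).hasFDerivAt)).comp _
      (e.symm : (Fin (m + 1) → ℝ) →L[ℝ] EuclideanSpace ℝ (Fin (m + 1))).hasFDerivAt
  have hdiv : ∀ x, ∑ i, f' x (Pi.single i 1) i = ((m + 1 : ℕ) : ℝ) * H := by
    intro x
    rw [hmean (e.symm x)]
    unfold vdiv
    rw [trace_eq_sum_coord]
    apply Finset.sum_congr rfl
    intro i _
    rfl
  -- The key estimate, for every R > 0
  have hest : ∀ R : ℝ, 0 < R → |H| * R ≤ 1 := by
    intro R hR
    set a : Fin (m + 1) → ℝ := fun _ => -R with ha_def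
    set b : Fin (m + 1) → ℝ := fun _ => R with hb_def
    have hle : a ≤ b := fun i => by simp [ha_def, hb_def]; linarith
    have hconst : (fun x : Fin (m + 1) → ℝ => ∑ i, f' x (Pi.single i 1) i) =
        fun _ => ((m + 1 : ℕ) : ℝ) * H := funext hdiv
    have hIcc_fin : volume (Set.Icc a b) < ⊤ := (isCompact_Icc).measure_lt_top
    have hfc : Continuous f := e.continuous.comp (hXc.continuous.comp e.symm.continuous)
    have hInt : IntegrableOn (fun x => ∑ i, f' x (Pi.single i 1) i) (Set.Icc a b) := by
      rw [IntegrableOn, hconst]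
      exact integrableOn_const hIcc_fin.ne
    have key := MeasureTheory.integral_divergence_of_hasFDerivAt_off_countable a b hle
      f f' ∅ Set.countable_empty hfc.continuousOn (fun x _ => hfd x) hInt
    rw [hconst, setIntegral_const, smul_eq_mul] at key
    -- volume computations
    have hvol : (volume (Set.Icc a b)).toReal = (2 * R) ^ (m + 1) := by
      rw [Real.volume_Icc_pi_toReal hle]
      simp [ha_def, hb_def]; ring
    -- bound each face integral
    have hface : ∀ i : Fin (m + 1), ∀ c : ℝ,
        |∫ x in Set.Icc (a ∘ i.succAbove) (b ∘ i.succAbove), f (i.insertNth c x) i| ≤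
          (2 * R) ^ m := by
      intro i c
      have hle' : (a ∘ i.succAbove) ≤ (b ∘ i.succAbove) := fun j => hle (i.succAbove j)
      have hvol' : (volume (Set.Icc (a ∘ i.succAbove) (b ∘ i.succAbove))).toReal
          = (2 * R) ^ m := by
        rw [Real.volume_Icc_pi_toReal hle']
        simp [ha_def, hb_def]; ring
      have hb1 : ∀ x ∈ Set.Icc (a ∘ i.succAbove) (b ∘ i.succAbove),
          ‖f (i.insertNth c x) i‖ ≤ 1 := by
        intro x _
        have h1 : f (i.insertNth c x) i = (X (e.symm (i.insertNth c x))) i := rfl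
        rw [h1, Real.norm_eq_abs]
        exact (abs_coord_le_norm _ i).trans (hXle _)
      calc |∫ x in Set.Icc (a ∘ i.succAbove) (b ∘ i.succAbove), f (i.insertNth c x) i|
          ≤ 1 * (volume (Set.Icc (a ∘ i.succAbove) (b ∘ i.succAbove))).toReal := by
            rw [← Real.norm_eq_abs]
            exact norm_setIntegral_le_of_norm_le_const_ae' (isCompact_Icc).measure_lt_top
              (Filter.Eventually.of_forall hb1)
        _ = (2 * R) ^ m := by rw [one_mul, hvol']
    -- put it together
    have hbound : |((m + 1 : ℕ) : ℝ) * H| * (2 * R) ^ (m + 1) ≤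
        ((m + 1 : ℕ) : ℝ) * (2 * (2 * R) ^ m) := by
      have := key
      rw [measureReal_def, hvol] at this
      calc |((m + 1 : ℕ) : ℝ) * H| * (2 * R) ^ (m + 1)
          = |(2 * R) ^ (m + 1) * (((m + 1 : ℕ) : ℝ) * H)| := by
            rw [abs_mul ((2 * R) ^ (m + 1)) (((m + 1 : ℕ) : ℝ) * H),
              abs_of_nonneg (by positivity : (0:ℝ) ≤ (2*R)^(m+1))]; ring
        _ = |∑ i : Fin (m + 1),
              ((∫ x in Set.Icc (a ∘ i.succAbove) (b ∘ i.succAbove), f (i.insertNth (b i) x) i) -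
               ∫ x in Set.Icc (a ∘ i.succAbove) (b ∘ i.succAbove), f (i.insertNth (a i) x) i)| := by
            rw [← this]
        _ ≤ ∑ i : Fin (m + 1), (2 * (2 * R) ^ m) := by
            refine (Finset.abs_sum_le_sum_abs _ _).trans (Finset.sum_le_sum fun i _ => ?_)
            calc |_| ≤ |∫ x in Set.Icc (a ∘ i.succAbove) (b ∘ i.succAbove),
                  f (i.insertNth (b i) x) i| +
                |∫ x in Set.Icc (a ∘ i.succAbove) (b ∘ i.succAbove), f (i.insertNth (a i) x) i| :=
                abs_sub _ _
              _ ≤ (2 * R) ^ m + (2 * R) ^ m := add_le_add (hface i _) (hface i _)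
              _ = 2 * (2 * R) ^ m := by ring
        _ = ((m + 1 : ℕ) : ℝ) * (2 * (2 * R) ^ m) := by
            rw [Finset.sum_const, Finset.card_univ, Fintype.card_fin, nsmul_eq_mul]
    -- derive |H| * R ≤ 1
    have hpow : (0:ℝ) < (2 * R) ^ m := by positivity
    have hm1 : (0:ℝ) < ((m + 1 : ℕ) : ℝ) := by positivity
    have h2 : |H| * (((m + 1 : ℕ) : ℝ) * ((2 * R) ^ m * (2 * R))) ≤
        ((m + 1 : ℕ) : ℝ) * (2 * (2 * R) ^ m) := by
      calc |H| * (((m + 1 : ℕ) : ℝ) * ((2 * R) ^ m * (2 * R)))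
          = |((m + 1 : ℕ) : ℝ) * H| * (2 * R) ^ (m + 1) := by
            rw [abs_mul, abs_of_nonneg hm1.le, pow_succ]; ring
        _ ≤ _ := hbound
    have hq : (0:ℝ) < ((m + 1 : ℕ) : ℝ) * (2 * (2 * R) ^ m) := by positivity
    rw [← mul_le_mul_iff_left₀ hq, one_mul]
    calc |H| * R * (((m + 1 : ℕ) : ℝ) * (2 * (2 * R) ^ m))
        = |H| * (((m + 1 : ℕ) : ℝ) * ((2 * R) ^ m * (2 * R))) := by ring
      _ ≤ ((m + 1 : ℕ) : ℝ) * (2 * (2 * R) ^ m) := h2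
  -- conclude
  by_contra hH
  have habs : 0 < |H| := abs_pos.mpr hH
  have := hest (2 / |H|) (by positivity)
  rw [mul_comm, div_mul_cancel₀ _ habs.ne'] at this
  norm_num at this
end

section
/- Let ψ : ℝⁿ → ℝ be a C² function with |∇ψ| < 1 everywhere whose graph in ℝ^{n+1}_1 has constant mean curvature H, and suppose there exists C < 1 with |∇ψ| ≤ C on ℝⁿ. Then H = 0. -/
open MeasureTheory Metric
open scoped ENNReal

lemma coord_le_norm {n : ℕ} (y : EuclideanSpace ℝ (Fin n)) (i : Fin n) : |y i| ≤ ‖y‖ := by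
  have := abs_real_inner_le_norm (EuclideanSpace.single i (1:ℝ)) y
  simpa [EuclideanSpace.inner_single_left, EuclideanSpace.norm_single] using this

lemma trace_eq_sum {n : ℕ} (f : EuclideanSpace ℝ (Fin n) →L[ℝ] EuclideanSpace ℝ (Fin n)) :
    LinearMap.trace ℝ _ f.toLinearMap = ∑ i, f (EuclideanSpace.single i 1) i := by
  rw [LinearMap.trace_eq_matrix_trace ℝ (EuclideanSpace.basisFun (Fin n) ℝ).toBasis]
  simp [Matrix.trace, Matrix.diag, LinearMap.toMatrix_apply]

lemma div_const_of_bounded {m : ℕ}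
    (X : EuclideanSpace ℝ (Fin (m+1)) → EuclideanSpace ℝ (Fin (m+1)))
    (hX : ContDiff ℝ 1 X) (M c : ℝ) (hM : ∀ u, ‖X u‖ ≤ M)
    (hc : ∀ u, vdiv X u = c) : c = 0 := by
  have hM0 : 0 ≤ M := le_trans (norm_nonneg _) (hM 0)
  set E := PiLp.continuousLinearEquiv 2 ℝ (fun _ : Fin (m+1) => ℝ) with hE
  set F : (Fin (m+1) → ℝ) → (Fin (m+1) → ℝ) := fun x => E (X (E.symm x)) with hF
  set F' : (Fin (m+1) → ℝ) → (Fin (m+1) → ℝ) →L[ℝ] (Fin (m+1) → ℝ) :=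
    fun x => ((E.toContinuousLinearMap.comp (fderiv ℝ X (E.symm x))).comp
      E.symm.toContinuousLinearMap) with hF'
  have hXd : Differentiable ℝ X := hX.differentiable one_ne_zero
  have hFd : ∀ x, HasFDerivAt F (F' x) x := by
    intro x
    exact (E.toContinuousLinearMap.hasFDerivAt).comp x
      (((hXd _).hasFDerivAt).comp x (E.symm.toContinuousLinearMap.hasFDerivAt))
  have hsum : ∀ x, (∑ i, F' x (Pi.single i 1) i) = c := by
    intro x
    rw [← hc (E.symm x), vdiv, trace_eq_sum]
    rfl
  have key : ∀ R : ℝ, 0 < R → |c| * (2*R)^(m+1) ≤ (m+1 : ℝ) * (2 * (M * (2*R)^m)) := by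
    intro R hR
    set a : Fin (m+1) → ℝ := fun _ => -R with ha
    set b : Fin (m+1) → ℝ := fun _ => R with hb
    have hle : a ≤ b := fun i => by simp [ha, hb]; linarith
    have hvol : volume (Set.Icc a b) < ⊤ := isCompact_Icc.measure_lt_top
    have hdiv := integral_divergence_of_hasFDerivAt_off_countable a b hle F F' ∅
      Set.countable_empty
      (Continuous.continuousOn (by
        have : Continuous F := E.continuous.comp (hXd.continuous.comp E.symm.continuous)
        exact this))
      (fun x _ => hFd x)
      (by
        have : (fun x => ∑ i, F' x (Pi.single i 1) i) = fun _ => c := funext hsum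
        rw [this]
        exact (integrableOn_const hvol.ne))
    have hfacevol : ∀ i : Fin (m+1),
        (volume (Set.Icc (a ∘ i.succAbove) (b ∘ i.succAbove))).toReal = (2*R)^m := by
      intro i
      have e1 : (a ∘ i.succAbove) = (fun _ : Fin m => -R) := rfl
      have e2 : (b ∘ i.succAbove) = (fun _ : Fin m => R) := rfl
      rw [e1, e2, Real.volume_Icc_pi_toReal (fun _ => by linarith)]
      simp only [sub_neg_eq_add, Finset.prod_const, Finset.card_univ, Fintype.card_fin]
      ring
    have hFb : ∀ (y : Fin (m+1) → ℝ) (i : Fin (m+1)), ‖F y i‖ ≤ M := by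
      intro y i
      rw [Real.norm_eq_abs]
      exact le_trans (coord_le_norm (X (E.symm y)) i) (hM _)
    have hterm : ∀ (i : Fin (m+1)) (t : ℝ),
        ‖∫ x in Set.Icc (a ∘ i.succAbove) (b ∘ i.succAbove), F (i.insertNth t x) i‖
          ≤ M * (2*R)^m := by
      intro i t
      have h := norm_setIntegral_le_of_norm_le_const (μ := volume)
        (s := Set.Icc (a ∘ i.succAbove) (b ∘ i.succAbove))
        (f := fun x => F (i.insertNth t x) i)
        isCompact_Icc.measure_lt_top (fun x _ => hFb _ i)
      rwa [measureReal_def, hfacevol i] at h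
    have hLHS : (∫ x in Set.Icc a b, ∑ i, F' x (Pi.single i 1) i) = c * (2*R)^(m+1) := by
      simp only [hsum]
      rw [setIntegral_const, measureReal_def, Real.volume_Icc_pi_toReal hle]
      simp only [ha, hb, sub_neg_eq_add, Finset.prod_const, Finset.card_univ, Fintype.card_fin,
        smul_eq_mul]
      ring
    rw [hLHS] at hdiv
    have hRHS : |∑ i : Fin (m+1),
        ((∫ x in Set.Icc (a ∘ i.succAbove) (b ∘ i.succAbove), F (i.insertNth (b i) x) i)
          - ∫ x in Set.Icc (a ∘ i.succAbove) (b ∘ i.succAbove), F (i.insertNth (a i) x) i)|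
        ≤ (m+1 : ℝ) * (2 * (M * (2*R)^m)) := by
      calc _ ≤ ∑ i : Fin (m+1),
          |(∫ x in Set.Icc (a ∘ i.succAbove) (b ∘ i.succAbove), F (i.insertNth (b i) x) i)
            - ∫ x in Set.Icc (a ∘ i.succAbove) (b ∘ i.succAbove), F (i.insertNth (a i) x) i| :=
          Finset.abs_sum_le_sum_abs _ _
        _ ≤ ∑ _i : Fin (m+1), 2 * (M * (2*R)^m) := by
          refine Finset.sum_le_sum fun i _ => ?_
          have h1 := hterm i (b i)
          have h2 := hterm i (a i)
          rw [Real.norm_eq_abs] at h1 h2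
          calc |_ - _| ≤ |_| + |_| := abs_sub _ _
            _ ≤ M * (2*R)^m + M * (2*R)^m := add_le_add h1 h2
            _ = 2 * (M * (2*R)^m) := by ring
        _ = (m+1 : ℝ) * (2 * (M * (2*R)^m)) := by
          rw [Finset.sum_const, Finset.card_univ, Fintype.card_fin, nsmul_eq_mul]
          push_cast; ring
    calc |c| * (2*R)^(m+1) = |c * (2*R)^(m+1)| := by
          rw [abs_mul, abs_of_nonneg (by positivity : (0:ℝ) ≤ (2*R)^(m+1))]
      _ = |∑ i : Fin (m+1),
        ((∫ x in Set.Icc (a ∘ i.succAbove) (b ∘ i.succAbove), F (i.insertNth (b i) x) i)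
          - ∫ x in Set.Icc (a ∘ i.succAbove) (b ∘ i.succAbove), F (i.insertNth (a i) x) i)| := by
          rw [hdiv]
      _ ≤ _ := hRHS
  -- conclude c = 0
  have key2 : ∀ R : ℝ, 0 < R → |c| * (2*R) ≤ (m+1 : ℝ) * 2 * M := by
    intro R hR
    have h := key R hR
    have hp : (0:ℝ) < (2*R)^m := by positivity
    rw [pow_succ] at h
    nlinarith
  by_contra h0
  have habs : 0 < |c| := abs_pos.mpr h0
  set R := ((m+1 : ℝ) * 2 * M + 1) / (2 * |c|) with hR
  have hRpos : 0 < R := by positivity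
  have h := key2 R hRpos
  have : |c| * (2 * R) = (m+1 : ℝ) * 2 * M + 1 := by
    rw [hR]; field_simp
  linarith


lemma Xcontdiff {n : ℕ} (ψ : EuclideanSpace ℝ (Fin n) → ℝ) (hψ : ContDiff ℝ 2 ψ)
    (hsp : ∀ u, ‖gradient ψ u‖ < 1) :
    ContDiff ℝ 1 (fun v => (Real.sqrt (1 - ‖gradient ψ v‖ ^ 2))⁻¹ • gradient ψ v) := by
  have hg : ContDiff ℝ 1 (gradient ψ) := by
    have : gradient ψ = fun x => (InnerProductSpace.toDual ℝ _).symm (fderiv ℝ ψ x) := rfl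
    rw [this]
    exact (InnerProductSpace.toDual ℝ _).symm.contDiff.comp
      (hψ.fderiv_right (by norm_num))
  have hn2 : ContDiff ℝ 1 fun v => 1 - ‖gradient ψ v‖ ^ 2 := by
    have h1 : ContDiff ℝ 1 fun v => (inner ℝ (gradient ψ v) (gradient ψ v) : ℝ) := hg.inner ℝ hg
    have : (fun v => 1 - ‖gradient ψ v‖ ^ 2)
        = fun v => 1 - (inner ℝ (gradient ψ v) (gradient ψ v) : ℝ) := by
      funext v; rw [real_inner_self_eq_norm_sq]
    rw [this]
    exact contDiff_const.sub h1
  have hpos : ∀ v, 0 < 1 - ‖gradient ψ v‖ ^ 2 := by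
    intro v
    have h := hsp v
    nlinarith [norm_nonneg (gradient ψ v)]
  rw [contDiff_iff_contDiffAt]
  intro v
  refine ContDiffAt.fun_smul ?_ hg.contDiffAt
  refine ContDiffAt.inv ?_ (Real.sqrt_pos.mpr (hpos v)).ne'
  exact (Real.contDiffAt_sqrt (hpos v).ne').comp v hn2.contDiffAt

/-- An entire space-like CMC graph with a uniform gradient bound |∇ψ| ≤ C < 1 has
vanishing mean curvature (Corollary 3.4). -/
theorem cmc_vanishing_uniform_gradient (n : ℕ) (hn : 0 < n) (H C : ℝ) (hC : C < 1)
    (ψ : EuclideanSpace ℝ (Fin n) → ℝ) (hψ : ContDiff ℝ 2 ψ)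
    (hsp : ∀ u, ‖gradient ψ u‖ < 1)
    (hmean : ∀ u, (n : ℝ) * H =
      vdiv (fun v => (Real.sqrt (1 - ‖gradient ψ v‖ ^ 2))⁻¹ • gradient ψ v) u)
    (hgrad : ∀ u : EuclideanSpace ℝ (Fin n), ‖gradient ψ u‖ ≤ C) :
    H = 0 := by
  obtain ⟨m, rfl⟩ : ∃ m, n = m + 1 := ⟨n - 1, (Nat.succ_pred_eq_of_pos hn).symm⟩
  set X : EuclideanSpace ℝ (Fin (m+1)) → EuclideanSpace ℝ (Fin (m+1)) :=
    fun v => (Real.sqrt (1 - ‖gradient ψ v‖ ^ 2))⁻¹ • gradient ψ v with hXdef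
  have hC0 : 0 ≤ C := le_trans (norm_nonneg _) (hgrad 0)
  have hCsq : 0 < 1 - C^2 := by nlinarith
  set M : ℝ := C / Real.sqrt (1 - C^2) with hMdef
  have hM : ∀ u, ‖X u‖ ≤ M := by
    intro u
    set t := ‖gradient ψ u‖ with ht
    have ht0 : 0 ≤ t := norm_nonneg _
    have htC : t ≤ C := hgrad u
    have h1 : Real.sqrt (1 - C^2) ≤ Real.sqrt (1 - t^2) :=
      Real.sqrt_le_sqrt (by nlinarith)
    have h2 : 0 < Real.sqrt (1 - C^2) := Real.sqrt_pos.mpr hCsq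
    have h3 : 0 < Real.sqrt (1 - t^2) := lt_of_lt_of_le h2 h1
    rw [hXdef]
    simp only [norm_smul, norm_inv, Real.norm_eq_abs, abs_of_pos h3]
    rw [← ht]
    rw [abs_of_pos h3]
    calc (Real.sqrt (1 - t^2))⁻¹ * t ≤ (Real.sqrt (1 - C^2))⁻¹ * C := by
          apply mul_le_mul (by gcongr) htC ht0 (by positivity)
      _ = M := by rw [hMdef]; ring
  have hXcd : ContDiff ℝ 1 X := Xcontdiff ψ hψ hsp
  have hc : ∀ u, vdiv X u = ((m+1 : ℕ) : ℝ) * H := fun u => (hmean u).symm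
  have hzero : ((m+1 : ℕ) : ℝ) * H = 0 :=
    div_const_of_bounded X hXcd M _ hM hc
  have : ((m+1 : ℕ) : ℝ) ≠ 0 := by positivity
  exact (mul_eq_zero.mp hzero).resolve_left this
end
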